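/- Let (A, B, C) be a recollement of abelian categories with enough projectives and let X_B, X_C be resolving subcategories of B and C. Then X_C-res C ≤ X_B-res B + X_C-res j*(X_B), where X_C-res j*(X_B) = sup{X_C-res j*(X) : X ∈ X_B}. In particular, if j*(X_B) ⊆ X_C then X_C-res C ≤ X_B-res B. -/

import Mathlib

open CategoryTheory CategoryTheory.Limits

attribute [local instance] Abelian.hasFiniteBiproducts

universe v₁ v₂ v₃ u₁ u₂ u₃

/-- A recollement of abelian categories. -/
structure Recollement (A : Type u₁) (B : Type u₂) (C : Type u₃)
    [Category.{v₁} A] [Category.{v₂} B] [Category.{v₃} C]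
    [Abelian A] [Abelian B] [Abelian C] where
  /-- the functor `i^*` -/
  iStar : B ⥤ A
  /-- the functor `i_*` -/
  iLower : A ⥤ B
  /-- the functor `i^!` -/
  iShriek : B ⥤ A
  /-- the functor `j_!` -/
  jLower : C ⥤ B
  /-- the functor `j^*` -/
  jStar : B ⥤ C
  /-- the functor `j_*` -/
  jUpper : C ⥤ B
  adj₁ : iStar ⊣ iLower
  adj₂ : iLower ⊣ iShriek
  adj₃ : jLower ⊣ jStar
  adj₄ : jStar ⊣ jUpper
  iLower_preservesFiniteLimits : PreservesFiniteLimits iLower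
  iLower_preservesFiniteColimits : PreservesFiniteColimits iLower
  jStar_preservesFiniteLimits : PreservesFiniteLimits jStar
  jStar_preservesFiniteColimits : PreservesFiniteColimits jStar
  iStar_preservesFiniteColimits : PreservesFiniteColimits iStar
  iShriek_preservesFiniteLimits : PreservesFiniteLimits iShriek
  jLower_preservesFiniteColimits : PreservesFiniteColimits jLower
  jUpper_preservesFiniteLimits : PreservesFiniteLimits jUpper
  iLower_full : iLower.Full
  iLower_faithful : iLower.Faithful
  jLower_full : jLower.Full
  jLower_faithful : jLower.Faithful
  jUpper_full : jUpper.Full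
  jUpper_faithful : jUpper.Faithful
  im_eq_ker : ∀ b : B, IsZero (jStar.obj b) ↔ ∃ a : A, Nonempty (iLower.obj a ≅ b)

variable {A : Type u₁} [Category.{v₁} A] [Abelian A]

/-- A resolving subcategory: contains the projectives, closed under extensions
and under kernels of epimorphisms (given by short exact sequences). -/
structure IsResolving (X : Set A) : Prop where
  projective_mem : ∀ P : A, Projective P → P ∈ X
  ext_closed : ∀ S : ShortComplex A, S.ShortExact → S.X₁ ∈ X → S.X₃ ∈ X → S.X₂ ∈ X
  ker_epi_closed : ∀ S : ShortComplex A, S.ShortExact → S.X₂ ∈ X → S.X₃ ∈ X → S.X₁ ∈ X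

/-- `ResLE X M n` : there is an exact sequence `0 → X_n → ⋯ → X_0 → M → 0`
with all `X_i ∈ X`. -/
inductive ResLE (X : Set A) : A → ℕ → Prop
  | zero {M X₀ : A} (e : X₀ ≅ M) (hX₀ : X₀ ∈ X) : ResLE X M 0
  | succ {M K X₀ : A} {n : ℕ} (f : K ⟶ X₀) (g : X₀ ⟶ M) (w : f ≫ g = 0)
      (hse : (ShortComplex.mk f g w).ShortExact) (hX₀ : X₀ ∈ X)
      (hK : ResLE X K n) : ResLE X M (n + 1)

/-- The `X`-resolution dimension of an object `M` (`⊤` if there is no finite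
`X`-resolution). -/
noncomputable def resDim (X : Set A) (M : A) : ℕ∞ :=
  sInf {n : ℕ∞ | ∃ m : ℕ, ResLE X M m ∧ n = (m : ℕ∞)}

/-- The `X`-resolution dimension of the whole category. -/
noncomputable def resDimCat (X : Set A) : ℕ∞ :=
  ⨆ M : A, resDim X M

/-- The closure of a class of objects under finite direct sums and direct summands. -/
def addClosure (D : Set A) : Set A :=
  {a | ∃ (n : ℕ) (f : Fin n → A), (∀ i, f i ∈ D) ∧
    ∃ (s : a ⟶ ⨁ f) (r : ⨁ f ⟶ a), s ≫ r = 𝟙 a}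

section AuxLemmas

open CategoryTheory.Abelian ZeroObject

variable {X : Set A}

namespace RecollementAux

/-- The zero object belongs to any resolving subcategory. -/
lemma zero_mem (hX : IsResolving X) : (0 : A) ∈ X :=
  hX.projective_mem _ (Limits.IsZero.projective (isZero_zero A))

/-- The short exact sequence `0 → 0 → M → N → 0` given by an isomorphism. -/
lemma ses_of_iso {M N : A} (e : M ≅ N) :
    (ShortComplex.mk (0 : (0 : A) ⟶ M) e.hom zero_comp).ShortExact where
  exact := by
    rw [ShortComplex.exact_iff_mono _ rfl]
    exact inferInstance
  mono_f := ⟨fun g h _ => (isZero_zero A).eq_of_tgt g h⟩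
  epi_g := inferInstance

/-- Resolving subcategories are closed under isomorphisms. -/
lemma mem_of_iso (hX : IsResolving X) {M N : A} (h : M ∈ X) (e : M ≅ N) : N ∈ X :=
  hX.ext_closed _ (ses_of_iso e.symm) (zero_mem hX) h

/-- Resolving subcategories are closed under binary biproducts. -/
lemma sum_mem (hX : IsResolving X) {P Q : A} (hP : P ∈ X) (hQ : Q ∈ X) :
    (P ⊞ Q : A) ∈ X :=
  hX.ext_closed _ (ShortComplex.Splitting.ofHasBinaryBiproduct P Q).shortExact hP hQ

/-- Transport a short exact sequence along an isomorphism of the third object. -/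
lemma shortExact_post {S : ShortComplex A} (hse : S.ShortExact) {N : A} (i : S.X₃ ≅ N) :
    (ShortComplex.mk S.f (S.g ≫ i.hom)
      (by rw [← Category.assoc, S.zero, zero_comp])).ShortExact :=
  ShortComplex.shortExact_of_iso
    (show S ≅ ShortComplex.mk S.f (S.g ≫ i.hom) (by rw [← Category.assoc, S.zero, zero_comp]) from
      ShortComplex.isoMk (Iso.refl _) (Iso.refl _) i (by simp) (by simp)) hse

/-- `ResLE` is invariant under isomorphisms. -/
lemma ResLE.ofIso {M N : A} {n : ℕ} (h : ResLE X M n) (e : M ≅ N) : ResLE X N n := by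
  cases h with
  | zero e' h0 => exact ResLE.zero (e'.trans e) h0
  | succ f g w hse h0 hK =>
      exact ResLE.succ f (g ≫ e.hom) (by rw [← Category.assoc, w, zero_comp])
        (shortExact_post hse e) h0 hK

/-- `ResLE` is monotone in the subcategory. -/
lemma ResLE.subset {Y Y' : Set A} {M : A} {n : ℕ} (h : ResLE Y M n) (hsub : Y ⊆ Y') :
    ResLE Y' M n := by
  induction h with
  | zero e h0 => exact ResLE.zero e (hsub h0)
  | succ f g w hse h0 _ ih => exact ResLE.succ f g w hse (hsub h0) ih

/-- `ResLE` is monotone in `n`. -/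
lemma ResLE.up (hX : IsResolving X) {M : A} {n : ℕ} (h : ResLE X M n) :
    ResLE X M (n + 1) := by
  induction h with
  | zero e h0 =>
      exact ResLE.succ (0 : (0 : A) ⟶ _) e.hom zero_comp (ses_of_iso e) h0
        (ResLE.zero (Iso.refl _) (zero_mem hX))
  | succ f g w hse h0 _ ih => exact ResLE.succ f g w hse h0 ih

lemma ResLE.le (hX : IsResolving X) {M : A} {n m : ℕ} (h : ResLE X M n) (hnm : n ≤ m) :
    ResLE X M m := by
  induction hnm with
  | refl => exact h
  | step _ ih => exact ResLE.up hX ih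

lemma resDim_le_iff (hX : IsResolving X) {M : A} {n : ℕ} :
    resDim X M ≤ (n : ℕ∞) ↔ ResLE X M n := by
  constructor
  · intro h
    have h2 : resDim X M < ((n + 1 : ℕ) : ℕ∞) := lt_of_le_of_lt h (by exact_mod_cast Nat.lt_succ_self n)
    obtain ⟨s, ⟨m, hm, rfl⟩, hlt⟩ := sInf_lt_iff.mp h2
    exact ResLE.le hX hm (Nat.lt_succ_iff.mp (by exact_mod_cast hlt))
  · intro h
    exact sInf_le ⟨n, h, rfl⟩

/-- The kernel short exact sequence of an epimorphism. -/
lemma kernel_ses {P Q : A} (g : P ⟶ Q) [Epi g] :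
    (ShortComplex.mk (kernel.ι g) g (kernel.condition g)).ShortExact where
  exact := ShortComplex.exact_of_f_is_kernel _ (kernelIsKernel g)
  mono_f := inferInstance
  epi_g := ‹_›

/-- Base change of a short exact sequence `0 → K → Y → Z → 0` along `b : B ⟶ Z` :
`0 → K → B ×_Z Y → B → 0`. -/
lemma pullback_ses_fst (S : ShortComplex A) (hS : S.ShortExact) {B : A} (b : B ⟶ S.X₃) :
    (ShortComplex.mk
      (pullback.lift (0 : S.X₁ ⟶ B) S.f (by rw [zero_comp, S.zero]) : S.X₁ ⟶ pullback b S.g)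
      (pullback.fst b S.g) (pullback.lift_fst _ _ _)).ShortExact := by
  haveI := hS.epi_g
  haveI := hS.mono_f
  have hksnd : (pullback.lift (0 : S.X₁ ⟶ B) S.f (by rw [zero_comp, S.zero]) :
      S.X₁ ⟶ pullback b S.g) ≫ pullback.snd b S.g = S.f := pullback.lift_snd _ _ _
  haveI hm : Mono (pullback.lift (0 : S.X₁ ⟶ B) S.f (by rw [zero_comp, S.zero]) :
      S.X₁ ⟶ pullback b S.g) := mono_of_mono_fac hksnd
  refine { exact := ?_, mono_f := hm, epi_g := inferInstance }
  apply ShortComplex.exact_of_f_is_kernel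
  refine KernelFork.IsLimit.ofι' _ _ (fun {T} s hs => ?_)
  have h2 : (s ≫ pullback.snd b S.g) ≫ S.g = 0 := by
    rw [Category.assoc, ← pullback.condition, ← Category.assoc, hs, zero_comp]
  obtain ⟨a, ha⟩ := KernelFork.IsLimit.lift' hS.fIsKernel _ h2
  refine ⟨a, ?_⟩
  apply pullback.hom_ext
  · rw [Category.assoc, pullback.lift_fst, comp_zero]
    exact hs.symm
  · rw [Category.assoc, pullback.lift_snd]
    exact ha

/-- For a short exact sequence `0 → K → B → Z → 0` and `p : Y ⟶ Z`:
`0 → K → B ×_Z Y → Y → 0`. -/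
lemma pullback_ses_snd (S : ShortComplex A) (hS : S.ShortExact) {Y : A} (p : Y ⟶ S.X₃) :
    (ShortComplex.mk
      (pullback.lift S.f (0 : S.X₁ ⟶ Y) (by rw [zero_comp, S.zero]) : S.X₁ ⟶ pullback S.g p)
      (pullback.snd S.g p) (pullback.lift_snd _ _ _)).ShortExact := by
  haveI := hS.epi_g
  haveI := hS.mono_f
  have hkfst : (pullback.lift S.f (0 : S.X₁ ⟶ Y) (by rw [zero_comp, S.zero]) :
      S.X₁ ⟶ pullback S.g p) ≫ pullback.fst S.g p = S.f := pullback.lift_fst _ _ _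
  haveI hm : Mono (pullback.lift S.f (0 : S.X₁ ⟶ Y) (by rw [zero_comp, S.zero]) :
      S.X₁ ⟶ pullback S.g p) := mono_of_mono_fac hkfst
  refine { exact := ?_, mono_f := hm, epi_g := inferInstance }
  apply ShortComplex.exact_of_f_is_kernel
  refine KernelFork.IsLimit.ofι' _ _ (fun {T} s hs => ?_)
  have h2 : (s ≫ pullback.fst S.g p) ≫ S.g = 0 := by
    rw [Category.assoc, pullback.condition, ← Category.assoc, hs, zero_comp]
  obtain ⟨a, ha⟩ := KernelFork.IsLimit.lift' hS.fIsKernel _ h2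
  refine ⟨a, ?_⟩
  apply pullback.hom_ext
  · rw [Category.assoc, pullback.lift_fst]
    exact ha
  · rw [Category.assoc, pullback.lift_snd, comp_zero]
    exact hs.symm

/-- For a short exact sequence `0 → K → B → Z → 0` and an epimorphism `q : Y ⟶ B`:
`0 → Y ×_B K → Y → Z → 0`. -/
lemma pullback_comp_ses (S : ShortComplex A) (hS : S.ShortExact) {Y : A} (q : Y ⟶ S.X₂)
    [Epi q] :
    (ShortComplex.mk (pullback.fst q S.f) (q ≫ S.g)
      (by rw [pullback.condition_assoc, S.zero, comp_zero])).ShortExact := by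
  haveI := hS.epi_g
  haveI := hS.mono_f
  refine { exact := ?_, mono_f := inferInstance, epi_g := epi_comp _ _ }
  apply ShortComplex.exact_of_f_is_kernel
  refine KernelFork.IsLimit.ofι' _ _ (fun {T} s hs => ?_)
  have h2 : (s ≫ q) ≫ S.g = 0 := by rw [Category.assoc]; exact hs
  obtain ⟨a, ha⟩ := KernelFork.IsLimit.lift' hS.fIsKernel _ h2
  exact ⟨pullback.lift s a ha.symm, pullback.lift_fst _ _ _⟩

section Pseudo

attribute [local instance] Abelian.Pseudoelement.objectToSort Abelian.Pseudoelement.homToFun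

open CategoryTheory.Abelian.Pseudoelement

lemma pseudo_id_apply {P : A} (a : P) : (𝟙 P : P ⟶ P) a = a :=
  Quotient.inductionOn a fun x =>
    Quotient.sound ⟨x.left, 𝟙 _, 𝟙 _, inferInstanceAs (Epi (𝟙 x.left)), inferInstanceAs (Epi (𝟙 x.left)), by simp [Abelian.app]⟩

/-- Horseshoe-type lemma: in a short exact sequence `0 → A → B → Z → 0` with `Z ∈ X`,
if `A` has an `X`-resolution of length `n`, then so does `B`. -/
lemma horseshoe [EnoughProjectives A] (hX : IsResolving X) :
    ∀ (n : ℕ) (S : ShortComplex A), S.ShortExact → S.X₃ ∈ X → ResLE X S.X₁ n →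
      ResLE X S.X₂ n := by
  intro n
  induction n with
  | zero =>
    intro S hS h3 h1
    cases h1 with
    | zero e h0 => exact ResLE.zero (Iso.refl _) (hX.ext_closed S hS (mem_of_iso hX h0 e) h3)
  | succ n ih =>
    intro S hS h3 h1
    cases h1 with
    | @succ _ KA XA _ fA u wA hseA hXA hKA =>
      haveI := hS.epi_g
      haveI := hS.mono_f
      haveI : Epi u := hseA.epi_g
      haveI : Mono fA := hseA.mono_f
      set P := Projective.over S.X₃ with hP
      set π := Projective.π S.X₃ with hπ
      set v : P ⟶ S.X₂ := Projective.factorThru π S.g with hv0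
      have hv : v ≫ S.g = π := Projective.factorThru_comp _ _
      set e : (XA ⊞ P) ⟶ S.X₂ := biprod.desc (u ≫ S.f) v with he
      have hinl : biprod.inl ≫ e = u ≫ S.f := biprod.inl_desc _ _
      have hinr : biprod.inr ≫ e = v := biprod.inr_desc _ _
      have heg : e ≫ S.g = biprod.snd ≫ π := by
        apply biprod.hom_ext'
        · rw [← Category.assoc, hinl, Category.assoc, S.zero, comp_zero,
            ← Category.assoc, biprod.inl_snd, zero_comp]
        · rw [← Category.assoc, hinr, hv, ← Category.assoc, biprod.inr_snd, Category.id_comp]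
      haveI hepi : Epi e := by
        refine Preadditive.epi_of_cancel_zero _ (fun {T} t ht => ?_)
        have hi : u ≫ S.f ≫ t = 0 := by
          rw [← Category.assoc, ← hinl, Category.assoc, ht, comp_zero]
        have h1 : S.f ≫ t = 0 := zero_of_epi_comp u hi
        obtain ⟨t', ht'⟩ := CokernelCofork.IsColimit.desc' hS.gIsCokernel t h1
        have hvt : v ≫ t = 0 := by
          rw [← hinr, Category.assoc, ht, comp_zero]
        have hπt : π ≫ t' = 0 := by
          rw [← hv, Category.assoc]
          exact ht' ▸ hvt
        have ht0 : t' = 0 := zero_of_epi_comp π hπt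
        rw [← ht', ht0, comp_zero]
      have hwkA : (fA ≫ biprod.inl) ≫ e = 0 := by
        rw [Category.assoc, hinl, ← Category.assoc, wA, zero_comp]
      set kA : KA ⟶ kernel e := kernel.lift e (fA ≫ biprod.inl) hwkA with hkA
      have hq0 : (kernel.ι e ≫ biprod.snd) ≫ π = 0 := by
        rw [Category.assoc, ← heg, ← Category.assoc, kernel.condition, zero_comp]
      set q : kernel e ⟶ kernel π := kernel.lift π (kernel.ι e ≫ biprod.snd) hq0 with hq
      have hmid_w : kA ≫ q = 0 := by
        rw [← cancel_mono (kernel.ι π), Category.assoc, kernel.lift_ι, ← Category.assoc,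
          kernel.lift_ι, Category.assoc, biprod.inl_snd, comp_zero, zero_comp]
      haveI hqepi : Epi q := by
        apply epi_of_pseudo_surjective
        intro y
        have h1 : S.g (v ((kernel.ι π) y)) = 0 := by
          rw [← Pseudoelement.comp_apply, hv, ← Pseudoelement.comp_apply, kernel.condition, Pseudoelement.zero_apply]
        obtain ⟨a, ha⟩ := pseudo_exact_of_exact hS.exact _ h1
        obtain ⟨xa, hxa⟩ := pseudo_surjective_of_epi u a
        have key : e ((biprod.inr : P ⟶ XA ⊞ P) ((kernel.ι π) y))
            = e ((biprod.inl : XA ⟶ XA ⊞ P) xa) := by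
          have l1 : e ((biprod.inr : P ⟶ XA ⊞ P) ((kernel.ι π) y)) = v ((kernel.ι π) y) := by
            rw [← Pseudoelement.comp_apply, hinr]
          have l2 : e ((biprod.inl : XA ⟶ XA ⊞ P) xa) = v ((kernel.ι π) y) := by
            rw [← Pseudoelement.comp_apply, hinl, Pseudoelement.comp_apply, hxa, ha]
          rw [l1, l2]
        obtain ⟨z, hz0, hz⟩ := sub_of_eq_image e _ _ key
        have hsnd : (biprod.snd : XA ⊞ P ⟶ P) z = (kernel.ι π) y := by
          rw [hz _ biprod.snd (by rw [← Pseudoelement.comp_apply, biprod.inl_snd, Pseudoelement.zero_apply]),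
            ← Pseudoelement.comp_apply, biprod.inr_snd, pseudo_id_apply]
        obtain ⟨zk, hzk⟩ := pseudo_exact_of_exact (kernel_ses e).exact z hz0
        refine ⟨zk, pseudo_injective_of_mono (kernel.ι π) ?_⟩
        rw [← Pseudoelement.comp_apply, kernel.lift_ι, Pseudoelement.comp_apply, hzk, hsnd]
      have hmid_exact : (ShortComplex.mk kA q hmid_w).Exact := by
        apply exact_of_pseudo_exact
        intro b hb
        have h1 : (kernel.ι e ≫ biprod.snd) b = 0 := by
          rw [← kernel.lift_ι π (kernel.ι e ≫ biprod.snd) hq0, Pseudoelement.comp_apply, hb, apply_zero]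
        have h2 := pseudo_exact_of_exact
          (ShortComplex.Splitting.ofHasBinaryBiproduct XA P).exact ((kernel.ι e) b)
          (by rw [← Pseudoelement.comp_apply]; exact h1)
        obtain ⟨xa, hxa⟩ := h2
        have h3 : S.f (u xa) = 0 := by
          rw [← Pseudoelement.comp_apply, ← hinl, Pseudoelement.comp_apply, hxa, ← Pseudoelement.comp_apply, kernel.condition, Pseudoelement.zero_apply]
        have h4 : u xa = 0 := pseudo_injective_of_mono S.f (by rw [h3, apply_zero])
        obtain ⟨ka, hka⟩ := pseudo_exact_of_exact hseA.exact xa h4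
        refine ⟨ka, pseudo_injective_of_mono (kernel.ι e) ?_⟩
        rw [← Pseudoelement.comp_apply, kernel.lift_ι, Pseudoelement.comp_apply, hka, hxa]
      haveI : Mono (fA ≫ (biprod.inl : XA ⟶ XA ⊞ P)) := mono_comp _ _
      have hmid : (ShortComplex.mk kA q hmid_w).ShortExact :=
        { exact := hmid_exact, mono_f := mono_of_mono_fac (kernel.lift_ι e _ hwkA),
          epi_g := hqepi }
      have hXP : kernel π ∈ X :=
        hX.ker_epi_closed _ (kernel_ses π) (hX.projective_mem _ inferInstance) h3
      have hKmid : ResLE X (kernel e) n := ih (ShortComplex.mk kA q hmid_w) hmid hXP hKA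
      exact ResLE.succ (kernel.ι e) e (kernel.condition e) (kernel_ses e)
        (sum_mem hX hXA (hX.projective_mem P inferInstance)) hKmid

end Pseudo

lemma cokernel_resLE_aux [EnoughProjectives A] (_hX : IsResolving X) (n : ℕ)
    (hi : ∀ S : ShortComplex A, S.ShortExact → ResLE X S.X₁ n → ResLE X S.X₃ n →
      ResLE X S.X₂ n)
    (S : ShortComplex A) (hS : S.ShortExact) (h1 : ResLE X S.X₁ n)
    (h2 : ResLE X S.X₂ (n + 1)) : ResLE X S.X₃ (n + 1) := by
  cases h2 with
  | @succ _ KB X₀ _ fB gB wB hseB hXB hKB =>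
    haveI : Epi gB := hseB.epi_g
    have seqA := pullback_ses_snd (ShortComplex.mk fB gB wB) hseB S.f
    have hD : ResLE X (pullback gB S.f) n := hi _ seqA hKB h1
    have seqC := pullback_comp_ses S hS gB
    exact ResLE.succ _ _ _ seqC hXB hD

lemma ext_resLE [EnoughProjectives A] (hX : IsResolving X) :
    ∀ (n : ℕ) (S : ShortComplex A), S.ShortExact → ResLE X S.X₁ n → ResLE X S.X₃ n →
      ResLE X S.X₂ n := by
  intro n
  induction n with
  | zero =>
    intro S hS h1 h3
    cases h1 with | zero e1 hm1 =>
    cases h3 with | zero e3 hm3 =>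
    exact ResLE.zero (Iso.refl _)
      (hX.ext_closed S hS (mem_of_iso hX hm1 e1) (mem_of_iso hX hm3 e3))
  | succ n ih =>
    intro S hS h1 h3
    cases h3 with
    | @succ _ KC XC _ fC gC wC hseC hXC hKC =>
      haveI := hS.epi_g
      have seq2 := pullback_ses_snd S hS gC
      have hD : ResLE X (pullback S.g gC) (n + 1) := horseshoe hX (n + 1) _ seq2 hXC h1
      have seq1 := pullback_ses_fst (ShortComplex.mk fC gC wC) hseC S.g
      exact cokernel_resLE_aux hX n ih _ seq1 hKC hD

lemma cokernel_resLE [EnoughProjectives A] (hX : IsResolving X) {n : ℕ}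
    (S : ShortComplex A) (hS : S.ShortExact) (h1 : ResLE X S.X₁ n)
    (h2 : ResLE X S.X₂ (n + 1)) : ResLE X S.X₃ (n + 1) :=
  cokernel_resLE_aux hX n (fun S' hS' => ext_resLE hX n S' hS') S hS h1 h2

lemma splice [EnoughProjectives A] (hX : IsResolving X) (k : ℕ) {M : A} {n : ℕ}
    (h : ResLE {c : A | ResLE X c k} M n) : ResLE X M (n + k) := by
  induction h with
  | zero e h0 =>
    rw [Nat.zero_add]
    exact ResLE.ofIso h0 e
  | @succ M' K X₀ m f g w hse h0 hK ih =>
    have hX₀ : ResLE X X₀ (m + k + 1) := ResLE.le hX h0 (by omega)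
    have hres := cokernel_resLE hX (ShortComplex.mk f g w) hse ih hX₀
    have hidx : m + 1 + k = m + k + 1 := by omega
    rw [hidx]
    exact hres

lemma ResLE.map {B' : Type u₂} [Category.{v₂} B'] [Abelian B'] (F : A ⥤ B')
    [F.PreservesZeroMorphisms] [PreservesFiniteLimits F] [PreservesFiniteColimits F]
    {Y : Set A} {M : A} {n : ℕ} (h : ResLE Y M n) :
    ResLE (F.obj '' Y) (F.obj M) n := by
  induction h with
  | zero e h0 => exact ResLE.zero (F.mapIso e) ⟨_, h0, rfl⟩
  | succ f g w hse h0 _ ih =>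
    exact ResLE.succ (F.map f) (F.map g) (by rw [← F.map_comp, w, F.map_zero])
      (hse.map_of_exact F) ⟨_, h0, rfl⟩ ih

end RecollementAux

end AuxLemmas

/-- `X_C`-res `C` ≤ `X_B`-res `B` + `X_C`-res `j*(X_B)`; in particular, if
`j*(X_B) ⊆ X_C` then `X_C`-res `C` ≤ `X_B`-res `B`. -/
theorem resDimCat_C_le
    (A : Type u₁) (B : Type u₂) (C : Type u₃)
    [Category.{v₁} A] [Category.{v₂} B] [Category.{v₃} C]
    [Abelian A] [Abelian B] [Abelian C]
    [EnoughProjectives A] [EnoughProjectives B] [EnoughProjectives C]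
    (R : Recollement A B C)
    (X_B : Set B) (X_C : Set C) (hB : IsResolving X_B) (hC : IsResolving X_C) :
    (resDimCat X_C ≤ resDimCat X_B +
      ⨆ (P : B) (_ : P ∈ X_B), resDim X_C (R.jStar.obj P)) ∧
    ((∀ b ∈ X_B, R.jStar.obj b ∈ X_C) → resDimCat X_C ≤ resDimCat X_B) := by
  classical
  have main : resDimCat X_C ≤ resDimCat X_B +
      ⨆ (P : B) (_ : P ∈ X_B), resDim X_C (R.jStar.obj P) := by
    by_cases hn : resDimCat X_B = ⊤
    · rw [hn, top_add]; exact le_top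
    by_cases hk : (⨆ (P : B) (_ : P ∈ X_B), resDim X_C (R.jStar.obj P)) = ⊤
    · rw [hk, add_top]; exact le_top
    obtain ⟨n, hn'⟩ := WithTop.ne_top_iff_exists.mp hn
    obtain ⟨k, hk'⟩ := WithTop.ne_top_iff_exists.mp hk
    rw [← hn', ← hk']
    refine iSup_le fun M => ?_
    suffices hkey : ResLE X_C M (n + k) by
      have := (RecollementAux.resDim_le_iff hC).mpr hkey
      exact_mod_cast this
    haveI := R.jStar_preservesFiniteLimits
    haveI := R.jStar_preservesFiniteColimits
    haveI := R.jLower_full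
    haveI := R.jLower_faithful
    haveI : R.jStar.IsLeftAdjoint := ⟨R.jUpper, ⟨R.adj₄⟩⟩
    have h1 : ResLE X_B (R.jLower.obj M) n := by
      rw [← RecollementAux.resDim_le_iff hB]
      have hle1 : resDim X_B (R.jLower.obj M) ≤ resDimCat X_B :=
        le_iSup (fun N => resDim X_B N) (R.jLower.obj M)
      rw [← hn'] at hle1
      exact_mod_cast hle1
    have h2 := RecollementAux.ResLE.map R.jStar h1
    have h3 : (R.jStar.obj '' X_B) ⊆ {c : C | ResLE X_C c k} := by
      rintro _ ⟨Pb, hPb, rfl⟩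
      have hle :=
        le_trans (le_iSup₂ (f := fun P (_ : P ∈ X_B) => resDim X_C (R.jStar.obj P)) Pb hPb)
          (le_of_eq hk'.symm)
      exact (RecollementAux.resDim_le_iff hC).mp (by exact_mod_cast hle)
    have h4 := RecollementAux.splice hC k (RecollementAux.ResLE.subset h2 h3)
    exact RecollementAux.ResLE.ofIso h4 (asIso (R.adj₃.unit.app M)).symm
  refine ⟨main, fun hsub => le_trans main ?_⟩
  have hz : (⨆ (P : B) (_ : P ∈ X_B), resDim X_C (R.jStar.obj P)) ≤ 0 := by
    refine iSup_le fun P => iSup_le fun hP => ?_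
    have hle : resDim X_C (R.jStar.obj P) ≤ ((0 : ℕ) : ℕ∞) :=
      (RecollementAux.resDim_le_iff hC).mpr (ResLE.zero (Iso.refl _) (hsub P hP))
    simpa using hle
  calc resDimCat X_B + (⨆ (P : B) (_ : P ∈ X_B), resDim X_C (R.jStar.obj P))
      ≤ resDimCat X_B + 0 := add_le_add_right hz _
    _ = resDimCat X_B := add_zero _
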